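/- Let Γ be a finite set of permutations each of which starts with 1. Then for every positive integer m, the following identity of formal power series in t over ℚ[y] holds: Σ_{n≥0} (t^n/n!)·Σ_{σ ∈ NM_n(Γ)} m^{LRmin(σ)} y^{1+des(σ)} = ( Σ_{n≥0} NM_{Γ,n}(y)·t^n/n! )^m, where the n = 0 term of the left-hand side is 1. Equivalently, NM_Γ(t,x,y) = (1/U_Γ(t,y))^x when x is specialized to a positive integer. -/

import Mathlib

open Polynomial

/-- The reduction of a list of distinct integers: replace the i-th smallest entry by i. -/
def redL (l : List ℕ) : List ℕ :=
  l.map (fun x => (l.countP (fun y => decide (y < x))) + 1)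

/-- The number of descents of a list. -/
def desL (l : List ℕ) : ℕ :=
  (l.zip l.tail).countP (fun p => decide (p.2 < p.1))

/-- `σ` has a `Γ`-match: some consecutive factor of length at least 2 reduces to a member of `Γ`. -/
def HasMatch (Γ : Set (List ℕ)) (l : List ℕ) : Prop :=
  ∃ i j : ℕ, 1 ≤ j ∧ i + j + 1 ≤ l.length ∧ redL ((l.drop i).take (j + 1)) ∈ Γ

open scoped Classical in
/-- The set of permutations of `{1,…,n}` (in one-line notation, as lists) with no `Γ`-match. -/
noncomputable def NMfinset (Γ : Set (List ℕ)) (n : ℕ) : Finset (List ℕ) :=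
  ((List.range' 1 n).permutations.toFinset).filter (fun l => ¬ HasMatch Γ l)

/-- `NM_{Γ,n}(y) = Σ_{σ ∈ NM_n(Γ)} y^{1+des(σ)}` for `n ≥ 1`, and `NM_{Γ,0}(y) = 1`. -/
noncomputable def NMpoly (Γ : Set (List ℕ)) (n : ℕ) : Polynomial ℚ :=
  if n = 0 then 1 else ∑ l ∈ NMfinset Γ n, X ^ (1 + desL l)

/-- The number of left-to-right minima of a list (positions whose entry is smaller than every
earlier entry). -/
def LRminL (l : List ℕ) : ℕ :=
  (List.range l.length).countP (fun j => decide (∀ i, i < j → l.getD j 0 < l.getD i 0))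

section ListLemmas

@[simp] lemma desL_nil : desL [] = 0 := rfl
@[simp] lemma desL_single (a : ℕ) : desL [a] = 0 := rfl

lemma desL_cons_cons (a b : ℕ) (t : List ℕ) :
    desL (a :: b :: t) = desL (b :: t) + (if b < a then 1 else 0) := by
  simp only [desL, List.tail_cons, List.zip_cons_cons, List.countP_cons]
  simp

lemma desL_append (l1 : List ℕ) (b : ℕ) (t : List ℕ) :
    desL (l1 ++ b :: t) = desL l1 + desL (b :: t) +
      (match l1.getLast? with | some a => if b < a then 1 else 0 | none => 0) := by
  induction l1 with
  | nil => simp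
  | cons a l ih =>
    cases l with
    | nil => simp [desL_cons_cons]
    | cons a' r =>
      have : ((a :: a' :: r) ++ b :: t) = a :: ((a' :: r) ++ b :: t) := rfl
      rw [this, show (a' :: r) ++ b :: t = a' :: (r ++ b :: t) from rfl, desL_cons_cons,
        show a' :: (r ++ b :: t) = (a' :: r) ++ b :: t from rfl, ih, desL_cons_cons]
      have : (a :: a' :: r).getLast? = (a' :: r).getLast? := by
        rw [List.getLast?_cons_cons]
      rw [this]; ring

lemma LRminL_nil : LRminL [] = 0 := rfl

end ListLemmas

section Part2
variable {Γ : Set (List ℕ)}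

lemma getD_append_left (l l' : List ℕ) {n : ℕ} (h : n < l.length) :
    (l ++ l').getD n 0 = l.getD n 0 := by
  rw [List.getD_eq_getElem _ _ (by simp; omega), List.getD_eq_getElem _ _ h,
    List.getElem_append_left h]

lemma getD_append_right (l l' : List ℕ) {n : ℕ} (h : n < l'.length) :
    (l ++ l').getD (l.length + n) 0 = l'.getD n 0 := by
  rw [List.getD_eq_getElem _ _ (by simp; omega), List.getD_eq_getElem _ _ h]
  rw [List.getElem_append_right (by omega)]
  congr 1
  omega

lemma LRminL_append (P B' : List ℕ) (hP : ∀ x ∈ P, 2 ≤ x) (hB' : ∀ x ∈ B', 2 ≤ x) :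
    LRminL (P ++ 1 :: B') = LRminL P + 1 := by
  unfold LRminL
  have hlen : (P ++ 1 :: B').length = P.length + (B'.length + 1) := by simp
  rw [hlen, List.range_add, List.countP_append]
  congr 1
  · apply List.countP_congr
    intro j hj
    rw [List.mem_range] at hj
    simp only [decide_eq_true_eq]
    constructor
    · intro h i hi
      have := h i hi
      rwa [getD_append_left _ _ hj, getD_append_left _ _ (lt_trans hi hj)] at this
    · intro h i hi
      rw [getD_append_left _ _ hj, getD_append_left _ _ (lt_trans hi hj)]
      exact h i hi
  · rw [List.countP_map, List.range_succ_eq_map, List.countP_cons]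
    have h0 : ((fun j => decide (∀ i, i < j → (P ++ 1 :: B').getD j 0 < (P ++ 1 :: B').getD i 0))
        ∘ (fun x => P.length + x)) 0 = true := by
      simp only [Function.comp_apply]
      simp only [decide_eq_true_eq]
      intro i hi
      simp only [Nat.add_zero] at *
      have h1 : (P ++ 1 :: B').getD P.length 0 = 1 := by
        have := getD_append_right P (1 :: B') (n := 0) (by simp)
        simpa using this
      rw [h1, getD_append_left _ _ hi]
      have : P.getD i 0 ∈ P := by
        rw [List.getD_eq_getElem _ _ hi]; exact List.getElem_mem _
      have := hP _ this
      omega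
    rw [h0, if_pos rfl]
    have hz : List.countP ((fun j => decide (∀ i, i < j →
        (P ++ 1 :: B').getD j 0 < (P ++ 1 :: B').getD i 0)) ∘ (fun x => P.length + x))
        (List.map Nat.succ (List.range B'.length)) = 0 := by
      rw [List.countP_eq_zero]
      intro a ha
      rw [List.mem_map] at ha
      obtain ⟨j', hj', rfl⟩ := ha
      rw [List.mem_range] at hj'
      simp only [Function.comp_apply, decide_eq_true_eq, not_forall]
      refine ⟨P.length, by omega, ?_⟩
      have h1 : (P ++ 1 :: B').getD P.length 0 = 1 := by
        have := getD_append_right P (1 :: B') (n := 0) (by simp)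
        simpa using this
      rw [h1]
      have h2 : (P ++ 1 :: B').getD (P.length + j'.succ) 0 = B'.getD j' 0 := by
        have := getD_append_right P (1 :: B') (n := j' + 1) (by simp; omega)
        simpa using this
      rw [h2]
      have : B'.getD j' 0 ∈ B' := by
        rw [List.getD_eq_getElem _ _ hj']; exact List.getElem_mem _
      have := hB' _ this
      omega
    rw [hz]

lemma hasMatch_take {l : List ℕ} {k : ℕ} (h : HasMatch Γ (l.take k)) : HasMatch Γ l := by
  obtain ⟨i, j, hj, hlen, hmem⟩ := h
  rw [List.length_take] at hlen
  refine ⟨i, j, hj, by omega, ?_⟩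
  rwa [List.drop_take, List.take_take, min_eq_left (by omega)] at hmem

lemma hasMatch_drop {l : List ℕ} {k : ℕ} (h : HasMatch Γ (l.drop k)) : HasMatch Γ l := by
  obtain ⟨i, j, hj, hlen, hmem⟩ := h
  rw [List.length_drop] at hlen
  refine ⟨k + i, j, hj, by omega, ?_⟩
  rwa [List.drop_drop] at hmem

lemma match_head_min (hΓ : ∀ τ ∈ Γ, τ.head? = some 1) {f : List ℕ} (hf : redL f ∈ Γ) :
    ∃ x f', f = x :: f' ∧ ∀ y ∈ f, ¬ y < x := by
  have hh := hΓ _ hf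
  unfold redL at hh
  cases f with
  | nil => simp at hh
  | cons x f' =>
    refine ⟨x, f', rfl, ?_⟩
    simp only [List.map_cons, List.head?_cons, Option.some.injEq] at hh
    intro y hy hlt
    have : List.countP (fun y => decide (y < x)) (x :: f') = 0 := by omega
    rw [List.countP_eq_zero] at this
    exact this y hy (by simpa using hlt)

end Part2

section Part3
variable {Γ : Set (List ℕ)}

lemma noMatch_append (hΓ : ∀ τ ∈ Γ, τ.head? = some 1) {P B' : List ℕ}
    (hP2 : ∀ x ∈ P, 2 ≤ x) (hnP : ¬ HasMatch Γ P) (hnB : ¬ HasMatch Γ (1 :: B')) :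
    ¬ HasMatch Γ (P ++ 1 :: B') := by
  set B := 1 :: B' with hB
  rintro ⟨i, j, hj, hlen, hmem⟩
  rw [List.length_append] at hlen
  by_cases hc1 : i + j + 1 ≤ P.length
  · apply hnP
    refine ⟨i, j, hj, hc1, ?_⟩
    have hi : i ≤ P.length := by omega
    have hd : (P ++ B).drop i = P.drop i ++ B := by
      rw [List.drop_append, Nat.sub_eq_zero_of_le hi, List.drop_zero]
    rw [hd, List.take_append, List.length_drop,
      Nat.sub_eq_zero_of_le (by omega), List.take_zero, List.append_nil] at hmem
    exact hmem
  · by_cases hc2 : P.length ≤ i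
    · apply hnB
      refine ⟨i - P.length, j, hj, by omega, ?_⟩
      have hd : (P ++ B).drop i = B.drop (i - P.length) := by
        rw [List.drop_append, List.drop_eq_nil_of_le hc2, List.nil_append]
      rwa [hd] at hmem
    · -- crossing case
      push_neg at hc2
      obtain ⟨x, f', hfeq, hmin⟩ := match_head_min hΓ hmem
      have hL : (P ++ B).length = P.length + B.length := List.length_append
      have hflen : (((P ++ B).drop i).take (j + 1)).length = j + 1 := by
        rw [List.length_take, List.length_drop]; omega
      have h0 : (((P ++ B).drop i).take (j + 1))[0]'(by omega) =
          (P ++ B)[i]'(by omega) := by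
        rw [List.getElem_take, List.getElem_drop]
        simp
      have hx : x = (P ++ B)[i]'(by omega) := by
        rw [← h0, List.getElem_of_eq hfeq]
        rfl
      have hx2 : 2 ≤ x := by
        rw [hx, List.getElem_append_left hc2]
        exact hP2 _ (List.getElem_mem _)
      have h1f : (1 : ℕ) ∈ ((P ++ B).drop i).take (j + 1) := by
        have hidx : P.length - i < j + 1 := by omega
        have h2 : (((P ++ B).drop i).take (j + 1))[P.length - i]'(by omega) =
            (P ++ B)[i + (P.length - i)]'(by omega) := by
          rw [List.getElem_take, List.getElem_drop]
        have h4 : (P ++ B)[i + (P.length - i)]'(by omega) = 1 := by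
          rw [List.getElem_append_right (by omega)]
          have h5 : i + (P.length - i) - P.length = 0 := by omega
          simp only [h5, hB, List.getElem_cons_zero]
        rw [h4] at h2
        have hm := List.getElem_mem (l := ((P ++ B).drop i).take (j + 1))
          (n := P.length - i) (by omega)
        rwa [h2] at hm
      exact hmin 1 h1f (by omega)

end Part3

section Part4
variable {Γ : Set (List ℕ)}

/-- `f` is strictly order preserving on elements of `l`. -/
def OrdIsoOn (f : ℕ → ℕ) (l : List ℕ) : Prop :=
  ∀ x ∈ l, ∀ y ∈ l, (f x < f y ↔ x < y)

lemma OrdIsoOn.injOn {f : ℕ → ℕ} {l : List ℕ} (hf : OrdIsoOn f l) :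
    ∀ x ∈ l, ∀ y ∈ l, f x = f y → x = y := by
  intro x hx y hy hxy
  rcases lt_trichotomy x y with h | h | h
  · exact absurd ((hf x hx y hy).mpr h) (by omega)
  · exact h
  · exact absurd ((hf y hy x hx).mpr h) (by omega)

lemma redL_map {f : ℕ → ℕ} {l : List ℕ} (hf : OrdIsoOn f l) : redL (l.map f) = redL l := by
  unfold redL
  rw [List.map_map]
  apply List.map_congr_left
  intro x hx
  simp only [Function.comp_apply]
  congr 1
  rw [List.countP_map]
  apply List.countP_congr
  intro y hy
  simp only [Function.comp_apply, decide_eq_true_eq]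
  exact hf y hy x hx

lemma desL_map {f : ℕ → ℕ} {l : List ℕ} (hf : OrdIsoOn f l) : desL (l.map f) = desL l := by
  unfold desL
  rw [← List.map_tail, List.zip_map, List.countP_map]
  apply List.countP_congr
  intro p hp
  have hmem := List.of_mem_zip hp
  simp only [Function.comp_apply, Prod.map_apply, decide_eq_true_eq]
  exact hf p.2 (List.mem_of_mem_tail hmem.2) p.1 hmem.1

lemma LRminL_map {f : ℕ → ℕ} {l : List ℕ} (hf : OrdIsoOn f l) :
    LRminL (l.map f) = LRminL l := by
  unfold LRminL
  rw [List.length_map]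
  apply List.countP_congr
  intro j hj
  rw [List.mem_range] at hj
  simp only [decide_eq_true_eq]
  have hg : ∀ k, k < l.length → (l.map f).getD k 0 = f (l.getD k 0) := by
    intro k hk
    rw [List.getD_eq_getElem _ _ (by simpa using hk), List.getD_eq_getElem _ _ hk,
      List.getElem_map]
  constructor
  · intro h i hi
    have := h i hi
    rw [hg j hj, hg i (lt_trans hi hj)] at this
    exact (hf _ (by rw [List.getD_eq_getElem _ _ hj]; exact List.getElem_mem _)
      _ (by rw [List.getD_eq_getElem _ _ (lt_trans hi hj)]; exact List.getElem_mem _)).mp this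
  · intro h i hi
    rw [hg j hj, hg i (lt_trans hi hj)]
    exact (hf _ (by rw [List.getD_eq_getElem _ _ hj]; exact List.getElem_mem _)
      _ (by rw [List.getD_eq_getElem _ _ (lt_trans hi hj)]; exact List.getElem_mem _)).mpr
      (h i hi)

lemma hasMatch_map {f : ℕ → ℕ} {l : List ℕ} (hf : OrdIsoOn f l) :
    HasMatch Γ (l.map f) ↔ HasMatch Γ l := by
  have key : ∀ i j : ℕ, redL (((l.map f).drop i).take (j + 1)) =
      redL ((l.drop i).take (j + 1)) := by
    intro i j
    rw [← List.map_drop, ← List.map_take]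
    apply redL_map
    intro x hx y hy
    exact hf x (List.mem_of_mem_drop (List.mem_of_mem_take hx))
      y (List.mem_of_mem_drop (List.mem_of_mem_take hy))
  constructor
  · rintro ⟨i, j, hj, hlen, hmem⟩
    exact ⟨i, j, hj, by simpa using hlen, by rwa [key] at hmem⟩
  · rintro ⟨i, j, hj, hlen, hmem⟩
    exact ⟨i, j, hj, by simpa using hlen, by rwa [← key] at hmem⟩

lemma countP_lt_countP_of_mem {l : List ℕ} {x y : ℕ} (hx : x ∈ l) (hxy : x < y) :
    l.countP (fun z => decide (z < x)) < l.countP (fun z => decide (z < y)) := by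
  rw [List.countP_eq_length_filter, List.countP_eq_length_filter]
  have hsub : List.Sublist (l.filter (fun z => decide (z < x))) (l.filter (fun z => decide (z < y))) :=
    List.monotone_filter_right l (fun a ha => by simp only [decide_eq_true_eq] at *; omega)
  rcases Nat.lt_or_ge (l.filter (fun z => decide (z < x))).length
      (l.filter (fun z => decide (z < y))).length with h | h
  · exact h
  · exfalso
    have heq := hsub.eq_of_length (le_antisymm hsub.length_le h)
    have hxin : x ∈ l.filter (fun z => decide (z < y)) :=
      List.mem_filter.mpr ⟨hx, by simpa using hxy⟩
    rw [← heq] at hxin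
    have := (List.mem_filter.mp hxin).2
    simp at this

lemma redL_ordIso {l : List ℕ} :
    OrdIsoOn (fun x => l.countP (fun y => decide (y < x)) + 1) l := by
  intro x hx y hy
  show l.countP (fun z => decide (z < x)) + 1 < l.countP (fun z => decide (z < y)) + 1 ↔ x < y
  constructor
  · intro h
    by_contra hc
    push_neg at hc
    rcases Nat.lt_or_ge y x with h2 | h2
    · have := countP_lt_countP_of_mem hy h2
      omega
    · have : x = y := by omega
      subst this; omega
  · intro h
    have := countP_lt_countP_of_mem hx h
    omega

lemma redL_nodup {l : List ℕ} (h : l.Nodup) : (redL l).Nodup :=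
  h.map_on (redL_ordIso.injOn)

lemma length_redL (l : List ℕ) : (redL l).length = l.length := List.length_map _

lemma redL_perm {l : List ℕ} (h : l.Nodup) : (redL l).Perm (List.range' 1 l.length) := by
  set n := l.length with hn
  have hnd := redL_nodup h
  have hsub : (redL l).toFinset ⊆ Finset.Icc 1 n := by
    intro a ha
    rw [List.mem_toFinset] at ha
    unfold redL at ha
    rw [List.mem_map] at ha
    obtain ⟨x, hx, rfl⟩ := ha
    rw [Finset.mem_Icc]
    show 1 ≤ l.countP (fun y => decide (y < x)) + 1 ∧ l.countP (fun y => decide (y < x)) + 1 ≤ n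
    have hlt : l.countP (fun y => decide (y < x)) < l.length := by
      have hle := List.countP_le_length (l := l) (p := fun y => decide (y < x))
      rcases Nat.lt_or_ge (l.countP (fun y => decide (y < x))) l.length with h' | h'
      · exact h'
      · exfalso
        have heq : l.countP (fun y => decide (y < x)) = l.length := by omega
        have := List.countP_eq_length.mp heq x hx
        simp at this
    omega
  have hcard : (redL l).toFinset = Finset.Icc 1 n := by
    apply Finset.eq_of_subset_of_card_le hsub
    rw [List.toFinset_card_of_nodup hnd, length_redL, Nat.card_Icc]
    omega
  rw [List.perm_ext_iff_of_nodup hnd (List.nodup_range' (s := 1) (n := n))]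
  intro a
  rw [← List.mem_toFinset, hcard, Finset.mem_Icc, List.mem_range'_1]
  omega

lemma countP_range'_lt {n x : ℕ} (h1 : 1 ≤ x) (h2 : x ≤ n) :
    (List.range' 1 n).countP (fun y => decide (y < x)) = x - 1 := by
  induction n with
  | zero => omega
  | succ n ih =>
    rw [List.range'_concat, List.countP_append]
    rcases Nat.lt_or_ge x (n + 1) with h | h
    · rw [ih (by omega)]
      have hone : List.countP (fun y => decide (y < x)) [1 + 1 * n] = 0 := by
        simp only [List.countP_cons, List.countP_nil, decide_eq_true_eq]
        rw [if_neg (by omega)]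
      rw [hone]
      omega
    · have hx : x = n + 1 := by omega
      subst hx
      have hall : (List.range' 1 n).countP (fun y => decide (y < n + 1)) = n := by
        rw [List.countP_eq_length (l := List.range' 1 n)
          (p := fun y => decide (y < n + 1)) |>.mpr, List.length_range']
        intro a ha
        rw [List.mem_range'_1] at ha
        simpa using (by omega : a < n + 1)
      rw [hall]
      have hone : List.countP (fun y => decide (y < n + 1)) [1 + 1 * n] = 0 := by
        simp only [List.countP_cons, List.countP_nil, decide_eq_true_eq]
        rw [if_neg (by omega)]
      rw [hone]
      omega

lemma redL_eq_self {l : List ℕ} (h : l.Perm (List.range' 1 l.length)) : redL l = l := by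
  unfold redL
  have : ∀ x ∈ l, l.countP (fun y => decide (y < x)) + 1 = x := by
    intro x hx
    have hx' : x ∈ List.range' 1 l.length := h.mem_iff.mp hx
    rw [List.mem_range'_1] at hx'
    rw [h.countP_eq, countP_range'_lt hx'.1 (by omega)]
    omega
  calc l.map _ = l.map id := List.map_congr_left this
  _ = l := List.map_id l

end Part4

section Part5

open scoped Classical in
noncomputable def NMS (Γ : Set (List ℕ)) (s : Finset ℕ) : Finset (List ℕ) :=
  ((s.sort (·≤·)).permutations.toFinset).filter (fun l => ¬ HasMatch Γ l)

variable {Γ : Set (List ℕ)}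

lemma perm_of_nodup_toFinset {l L : List ℕ} (hl : l.Nodup) (hL : L.Nodup)
    (h : l.toFinset = L.toFinset) : l.Perm L := by
  rw [List.perm_ext_iff_of_nodup hl hL]
  intro a
  rw [← List.mem_toFinset, h, List.mem_toFinset]

lemma mem_NMS {s : Finset ℕ} {l : List ℕ} :
    l ∈ NMS Γ s ↔ l.Nodup ∧ l.toFinset = s ∧ ¬ HasMatch Γ l := by
  classical
  rw [NMS, Finset.mem_filter, List.mem_toFinset, List.mem_permutations]
  constructor
  · rintro ⟨hperm, hnm⟩
    refine ⟨hperm.nodup_iff.mpr (Finset.sort_nodup _ _), ?_, hnm⟩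
    ext a
    rw [List.mem_toFinset, hperm.mem_iff, Finset.mem_sort]
  · rintro ⟨hnd, hfin, hnm⟩
    refine ⟨?_, hnm⟩
    apply perm_of_nodup_toFinset hnd (Finset.sort_nodup _ _)
    rw [hfin, Finset.sort_toFinset]

lemma toFinset_range' (n : ℕ) : (List.range' 1 n).toFinset = Finset.Icc 1 n := by
  ext a
  rw [List.mem_toFinset, List.mem_range'_1, Finset.mem_Icc]
  omega

lemma NMfinset_eq_NMS (n : ℕ) : NMfinset Γ n = NMS Γ (Finset.Icc 1 n) := by
  classical
  ext l
  rw [mem_NMS, NMfinset, Finset.mem_filter, List.mem_toFinset, List.mem_permutations]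
  constructor
  · rintro ⟨hperm, hnm⟩
    refine ⟨hperm.nodup_iff.mpr (List.nodup_range' (s := 1) (n := n)), ?_, hnm⟩
    rw [← toFinset_range' n]
    ext a
    rw [List.mem_toFinset, hperm.mem_iff, List.mem_toFinset]
  · rintro ⟨hnd, hfin, hnm⟩
    refine ⟨?_, hnm⟩
    apply perm_of_nodup_toFinset hnd (List.nodup_range' (s := 1) (n := n))
    rw [hfin, toFinset_range']

lemma length_of_mem_NMS {s : Finset ℕ} {l : List ℕ} (h : l ∈ NMS Γ s) :
    l.length = s.card := by
  obtain ⟨hnd, hfin, -⟩ := mem_NMS.mp h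
  rw [← hfin, List.toFinset_card_of_nodup hnd]

lemma countP_sorted {L : List ℕ} (hL : L.Pairwise (· < ·)) :
    ∀ i (h : i < L.length), L.countP (fun y => decide (y < L[i])) = i := by
  induction L with
  | nil => intro i h; simp at h
  | cons a t ih =>
    intro i h
    have hat : ∀ y ∈ t, a < y := fun y hy => List.rel_of_pairwise_cons hL hy
    cases i with
    | zero =>
      rw [List.countP_eq_zero.mpr]
      intro y hy
      simp only [decide_eq_true_eq]
      rcases List.mem_cons.mp hy with rfl | hyt
      · simp
      · have := hat y hyt
        simp only [List.getElem_cons_zero]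
        omega
    | succ i =>
      have hit : i < t.length := by simpa using h
      have hel : (a :: t)[i + 1] = t[i] := by simp
      rw [hel, List.countP_cons, ih (List.pairwise_cons.mp hL).2 i hit]
      have : a < t[i] := hat _ (List.getElem_mem hit)
      simp only [decide_eq_true_eq]
      rw [if_pos this]

lemma mem_NMS_perm_std {s : Finset ℕ} {l : List ℕ} (h : l ∈ NMS Γ s) :
    l.Perm (List.range' 1 l.length) → redL l = l := redL_eq_self

/-- Transfer a sum over no-match permutations of an arbitrary finite set `s`
to the standard set `{1, …, |s|}`. -/
lemma sum_NMS_transfer {M : Type*} [AddCommMonoid M] (s : Finset ℕ) (F : List ℕ → M)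
    (hF : ∀ (l : List ℕ) (f : ℕ → ℕ), OrdIsoOn f l → F (l.map f) = F l) :
    ∑ l ∈ NMS Γ s, F l = ∑ l ∈ NMS Γ (Finset.Icc 1 s.card), F l := by
  classical
  set L := s.sort (·≤·) with hLdef
  have hLnd : L.Nodup := Finset.sort_nodup _ _
  have hLlen : L.length = s.card := Finset.length_sort _
  have hLsort : L.Pairwise (· < ·) := (Finset.sortedLT_sort s).pairwise
  have hLfin : L.toFinset = s := Finset.sort_toFinset _ _
  set g : ℕ → ℕ := fun i => L.getD (i - 1) 0 with hgdef
  have hgel : ∀ x, 1 ≤ x → x ≤ s.card → ∀ (h : x - 1 < L.length), g x = L[x-1] := by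
    intro x h1 h2 h
    rw [hgdef]
    exact List.getD_eq_getElem _ _ h
  have hgmono : ∀ x y, 1 ≤ x → x ≤ s.card → 1 ≤ y → y ≤ s.card → (g x < g y ↔ x < y) := by
    intro x y hx1 hx2 hy1 hy2
    rw [hgel x hx1 hx2 (by omega), hgel y hy1 hy2 (by omega)]
    have hsm : StrictMono L.get := hLsort.sortedLT.strictMono_get
    have : L[x-1] = L.get ⟨x - 1, by omega⟩ := rfl
    rw [this, show L[y-1]'(by omega) = L.get ⟨y - 1, by omega⟩ from rfl, hsm.lt_iff_lt]
    simp only [Fin.mk_lt_mk]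
    omega
  have hOrd : ∀ τ ∈ NMS Γ (Finset.Icc 1 s.card), OrdIsoOn g τ := by
    intro τ hτ x hx y hy
    obtain ⟨hnd, hfin, -⟩ := mem_NMS.mp hτ
    have hx' : x ∈ Finset.Icc 1 s.card := by rw [← hfin]; exact List.mem_toFinset.mpr hx
    have hy' : y ∈ Finset.Icc 1 s.card := by rw [← hfin]; exact List.mem_toFinset.mpr hy
    rw [Finset.mem_Icc] at hx' hy'
    exact hgmono x y hx'.1 hx'.2 hy'.1 hy'.2
  apply Finset.sum_nbij' (fun l => redL l) (fun τ => τ.map g)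
  · -- maps into target
    intro σ hσ
    obtain ⟨hnd, hfin, hnm⟩ := mem_NMS.mp hσ
    have hlen : σ.length = s.card := by rw [← hfin, List.toFinset_card_of_nodup hnd]
    have hperm := redL_perm hnd
    rw [mem_NMS]
    refine ⟨redL_nodup hnd, ?_, ?_⟩
    · ext a
      rw [List.mem_toFinset, hperm.mem_iff, List.mem_range'_1, Finset.mem_Icc]
      omega
    · show ¬ HasMatch Γ (σ.map _)
      rw [hasMatch_map redL_ordIso]
      exact hnm
  · -- inverse maps into source
    intro τ hτ
    obtain ⟨hnd, hfin, hnm⟩ := mem_NMS.mp hτ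
    have hlen : τ.length = s.card := by
      have := length_of_mem_NMS hτ
      rwa [Nat.card_Icc, Nat.add_sub_cancel] at this
    have hOrdτ := hOrd τ hτ
    rw [mem_NMS]
    refine ⟨hnd.map_on hOrdτ.injOn, ?_, (hasMatch_map hOrdτ).not.mpr hnm⟩
    have hsub : (τ.map g).toFinset ⊆ s := by
      intro a ha
      rw [List.mem_toFinset, List.mem_map] at ha
      obtain ⟨x, hx, rfl⟩ := ha
      have hx' : x ∈ Finset.Icc 1 s.card := by rw [← hfin]; exact List.mem_toFinset.mpr hx
      rw [Finset.mem_Icc] at hx'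
      rw [hgel x hx'.1 hx'.2 (by omega)]
      have hmem : L[x-1]'(by omega) ∈ L.toFinset := List.mem_toFinset.mpr (List.getElem_mem _)
      rwa [hLfin] at hmem
    apply Finset.eq_of_subset_of_card_le hsub
    rw [List.toFinset_card_of_nodup (hnd.map_on hOrdτ.injOn), List.length_map, hlen]
  · -- left inverse
    intro σ hσ
    obtain ⟨hnd, hfin, hnm⟩ := mem_NMS.mp hσ
    show (σ.map _).map g = σ
    rw [List.map_map]
    have hpermL : σ.Perm L := perm_of_nodup_toFinset hnd hLnd (by rw [hfin, hLfin])
    calc σ.map (g ∘ fun x => σ.countP (fun y => decide (y < x)) + 1)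
        = σ.map id := by
          apply List.map_congr_left
          intro x hx
          simp only [Function.comp_apply, id_eq]
          have hxL : x ∈ L := hpermL.mem_iff.mp hx
          obtain ⟨i, hi, rfl⟩ := List.mem_iff_getElem.mp hxL
          rw [hpermL.countP_eq, countP_sorted hLsort i hi]
          show g (i + 1) = L[i]
          rw [hgel (i+1) (by omega) (by omega : i + 1 ≤ s.card) (by simpa using hi)]
          simp
      _ = σ := List.map_id σ
  · -- right inverse
    intro τ hτ
    obtain ⟨hnd, hfin, hnm⟩ := mem_NMS.mp hτ
    have hlen : τ.length = s.card := by
      have := length_of_mem_NMS hτ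
      rwa [Nat.card_Icc, Nat.add_sub_cancel] at this
    rw [redL_map (hOrd τ hτ)]
    apply redL_eq_self
    apply perm_of_nodup_toFinset hnd (List.nodup_range' (s := 1))
    rw [hfin, toFinset_range', hlen]
  · -- weights
    intro σ hσ
    obtain ⟨hnd, -, -⟩ := mem_NMS.mp hσ
    exact (hF σ _ redL_ordIso).symm

end Part5

section Part6
variable {Γ : Set (List ℕ)}

noncomputable def Wm (m : ℕ) (l : List ℕ) : Polynomial ℚ :=
  if l = [] then 1 else (m : Polynomial ℚ) ^ LRminL l * X ^ (1 + desL l)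

noncomputable def Gp (Γ : Set (List ℕ)) (m n : ℕ) : Polynomial ℚ :=
  ∑ σ ∈ NMS Γ (Finset.Icc 1 n), Wm m σ

open scoped Classical in
noncomputable def Bp (Γ : Set (List ℕ)) (k : ℕ) : Polynomial ℚ :=
  ∑ σ ∈ (NMS Γ (Finset.Icc 1 k)).filter (fun l => l.head? = some 1), X ^ (1 + desL σ)

lemma Wm_map (m : ℕ) (l : List ℕ) (f : ℕ → ℕ) (hf : OrdIsoOn f l) :
    Wm m (l.map f) = Wm m l := by
  unfold Wm
  rcases eq_or_ne l [] with rfl | hne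
  · simp
  · rw [if_neg (by simpa using hne), if_neg hne, LRminL_map hf, desL_map hf]

lemma headMin_map {f : ℕ → ℕ} {l : List ℕ} (hf : OrdIsoOn f l) :
    (∀ y ∈ l.map f, (l.map f).getD 0 0 ≤ y) ↔ (∀ y ∈ l, l.getD 0 0 ≤ y) := by
  cases l with
  | nil => simp
  | cons a t =>
    have hhd : ((a :: t).map f).getD 0 0 = f a := rfl
    have hhd2 : (a :: t).getD 0 0 = a := rfl
    rw [hhd, hhd2]
    constructor
    · intro h y hy
      have := h (f y) (List.mem_map_of_mem hy)
      have hiff := hf y hy a (List.mem_cons_self)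
      by_contra hc
      push_neg at hc
      exact absurd (hiff.mpr hc) (by omega)
    · intro h y hy
      rw [List.mem_map] at hy
      obtain ⟨x, hx, rfl⟩ := hy
      have := h x hx
      have hiff := hf x hx a (List.mem_cons_self)
      by_contra hc
      push_neg at hc
      exact absurd hc (by have := hiff.mp; omega)

lemma headMin_iff_head1 {l : List ℕ} {s : Finset ℕ} (hnd : l.Nodup) (hfin : l.toFinset = s)
    (h1 : 1 ∈ s) (hs : ∀ x ∈ s, 1 ≤ x) :
    (∀ y ∈ l, l.getD 0 0 ≤ y) ↔ l.head? = some 1 := by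
  have h1l : (1 : ℕ) ∈ l := by rw [← List.mem_toFinset, hfin]; exact h1
  have hne : l ≠ [] := by rintro rfl; simp at h1l
  have hlen : 0 < l.length := List.length_pos_iff.mpr hne
  have hhd : l.getD 0 0 = l[0] := List.getD_eq_getElem _ _ hlen
  have hh? : l.head? = some (l[0]) := by
    rw [List.head?_eq_getElem?, List.getElem?_eq_getElem hlen]
  constructor
  · intro h
    rw [hh?, Option.some.injEq]
    have h1le := h 1 h1l
    rw [hhd] at h1le
    have hmem : l[0] ∈ l := List.getElem_mem _
    have : 1 ≤ l[0] := hs _ (by rw [← hfin]; exact List.mem_toFinset.mpr hmem)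
    omega
  · intro h y hy
    rw [hh?, Option.some.injEq] at h
    rw [hhd, h]
    exact hs _ (by rw [← hfin]; exact List.mem_toFinset.mpr hy)

end Part6

section Part7
variable {Γ : Set (List ℕ)}

lemma Wm_split (m : ℕ) (P t : List ℕ) (hP : ∀ x ∈ P, 2 ≤ x) (ht : ∀ x ∈ t, 2 ≤ x) :
    Wm m (P ++ 1 :: t) = (m : Polynomial ℚ) * (Wm m P * X ^ (1 + desL (1 :: t))) := by
  unfold Wm
  rw [if_neg (by simp), LRminL_append P t hP ht]
  rcases eq_or_ne P [] with rfl | hne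
  · rw [if_pos rfl]
    simp only [List.nil_append, LRminL_nil, Nat.zero_add, pow_one, one_mul]
  · rw [if_neg hne]
    obtain ⟨a, ha⟩ : ∃ a, P.getLast? = some a :=
      ⟨P.getLast hne, (List.getLast?_eq_getLast hne).symm ▸ rfl⟩
    have haP : a ∈ P := by
      have := List.getLast_mem hne
      have heq : a = P.getLast hne := by
        rw [List.getLast?_eq_getLast hne] at ha
        exact ((Option.some.injEq _ _ ▸ ha : _) : P.getLast hne = a).symm
      rw [heq]; exact this
    rw [desL_append P 1 t, ha]
    have h2a : 2 ≤ a := hP a haP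
    have hif : (match some a with | some a => if 1 < a then (1:ℕ) else 0 | none => 0) = 1 := by
      show (if 1 < a then (1:ℕ) else 0) = 1
      exact if_pos (by omega)
    rw [hif]
    have hexp : 1 + (desL P + desL (1 :: t) + 1) = (1 + desL P) + (1 + desL (1 :: t)) := by omega
    rw [hexp, pow_add, pow_succ]
    ring

end Part7

section Part8
variable {Γ : Set (List ℕ)}

open scoped Classical

lemma NMS_empty : NMS Γ ∅ = {[]} := by
  ext l
  rw [mem_NMS, Finset.mem_singleton]
  constructor
  · rintro ⟨hnd, hfin, -⟩
    exact List.toFinset_eq_empty_iff l |>.mp hfin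
  · rintro rfl
    refine ⟨List.nodup_nil, by simp, ?_⟩
    rintro ⟨i, j, hj, hlen, -⟩
    simp at hlen

lemma Gp_zero (m : ℕ) : Gp Γ m 0 = 1 := by
  unfold Gp
  rw [show Finset.Icc 1 0 = (∅ : Finset ℕ) by simp, NMS_empty, Finset.sum_singleton]
  rfl

lemma Gp_rec (hΓh : ∀ τ ∈ Γ, τ.head? = some 1) (m n : ℕ) (hn : 1 ≤ n) :
    Gp Γ m n = (m : Polynomial ℚ) * ∑ k ∈ Finset.Icc 1 n,
      ((n-1).choose (k-1) : Polynomial ℚ) * (Bp Γ k * Gp Γ m (n-k)) := by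
  classical
  have hfacts : ∀ σ ∈ NMS Γ (Finset.Icc 1 n),
      ∃ t : List ℕ, σ.drop (σ.idxOf 1) = 1 :: t
        ∧ (∀ x ∈ σ.take (σ.idxOf 1), 2 ≤ x) ∧ (∀ x ∈ t, 2 ≤ x) := by
    intro σ hσ
    obtain ⟨hnd, hfin, hnm⟩ := mem_NMS.mp hσ
    have hmemσ : ∀ x ∈ σ, 1 ≤ x ∧ x ≤ n := by
      intro x hx
      have : x ∈ Finset.Icc 1 n := by rw [← hfin]; exact List.mem_toFinset.mpr hx
      exact Finset.mem_Icc.mp this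
    have h1σ : (1:ℕ) ∈ σ := by
      rw [← List.mem_toFinset, hfin]
      exact Finset.mem_Icc.mpr ⟨le_refl 1, hn⟩
    have hidx : σ.idxOf 1 < σ.length := List.idxOf_lt_length_iff.mpr h1σ
    have hget : σ[σ.idxOf 1]'hidx = 1 := List.getElem_idxOf hidx
    have hh : (σ.drop (σ.idxOf 1)).head? = some 1 := by
      rw [List.head?_drop, List.getElem?_eq_getElem hidx, hget]
    obtain ⟨t, ht⟩ : ∃ t, σ.drop (σ.idxOf 1) = 1 :: t := by
      cases hd : σ.drop (σ.idxOf 1) with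
      | nil => rw [hd] at hh; simp at hh
      | cons b t =>
        rw [hd] at hh
        simp only [List.head?_cons, Option.some.injEq] at hh
        exact ⟨t, by rw [hh]⟩
    have hsplit : σ.take (σ.idxOf 1) ++ σ.drop (σ.idxOf 1) = σ :=
      List.take_append_drop _ _
    have hndPB : (σ.take (σ.idxOf 1) ++ (1 :: t)).Nodup := by
      rw [← ht, hsplit]; exact hnd
    rw [List.nodup_append] at hndPB
    obtain ⟨hndP, hndB, hdisj⟩ := hndPB
    refine ⟨t, ht, ?_, ?_⟩
    · intro x hx
      have hx1 := (hmemσ x (List.mem_of_mem_take hx)).1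
      have hxne : x ≠ 1 := by
        intro rfl'
        exact hdisj x hx x (by rw [rfl']; exact List.mem_cons_self) rfl
      omega
    · intro x hx
      have hxσ : x ∈ σ := by
        rw [← hsplit, ht]
        exact List.mem_append_right _ (List.mem_cons_of_mem _ hx)
      have hx1 := (hmemσ x hxσ).1
      have hxne : x ≠ 1 := by
        rintro rfl
        exact (List.nodup_cons.mp hndB).1 hx
      omega
  have step1 : Gp Γ m n = ∑ p ∈ ((Finset.Icc 2 n).powerset).sigma
      (fun A => (NMS Γ A) ×ˢ ((NMS Γ (Finset.Icc 1 n \ A)).filter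
        (fun l => l.head? = some 1))),
      (m : Polynomial ℚ) * (Wm m p.2.1 * X ^ (1 + desL p.2.2)) := by
    unfold Gp
    apply Finset.sum_nbij'
      (i := fun σ => (⟨(σ.take (σ.idxOf 1)).toFinset,
        (σ.take (σ.idxOf 1), σ.drop (σ.idxOf 1))⟩ :
        Σ _ : Finset ℕ, List ℕ × List ℕ))
      (j := fun p => p.2.1 ++ p.2.2)
    · -- i maps into sigma set
      intro σ hσ
      obtain ⟨t, ht, hP2, ht2⟩ := hfacts σ hσ
      obtain ⟨hnd, hfin, hnm⟩ := mem_NMS.mp hσ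
      have hsplit : σ.take (σ.idxOf 1) ++ σ.drop (σ.idxOf 1) = σ :=
        List.take_append_drop _ _
      have hndP : (σ.take (σ.idxOf 1)).Nodup := hnd.sublist (List.take_sublist _ _)
      have hndB : (σ.drop (σ.idxOf 1)).Nodup := hnd.sublist (List.drop_sublist _ _)
      have hdisj : ∀ a ∈ σ.drop (σ.idxOf 1), a ∉ σ.take (σ.idxOf 1) := by
        have hnd2 : (σ.take (σ.idxOf 1) ++ σ.drop (σ.idxOf 1)).Nodup := by
          rw [hsplit]; exact hnd
        rw [List.nodup_append] at hnd2
        intro a ha hc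
        exact hnd2.2.2 a hc a ha rfl
      have hmemσ : ∀ x ∈ σ, x ∈ Finset.Icc 1 n := by
        intro x hx
        rw [← hfin]; exact List.mem_toFinset.mpr hx
      rw [Finset.mem_sigma, Finset.mem_product, Finset.mem_filter]
      refine ⟨?_, ⟨?_, ?_, ?_⟩⟩
      · rw [Finset.mem_powerset]
        intro a ha
        rw [List.mem_toFinset] at ha
        have h2a := hP2 a ha
        have := Finset.mem_Icc.mp (hmemσ a (List.mem_of_mem_take ha))
        rw [Finset.mem_Icc]
        omega
      · exact mem_NMS.mpr ⟨hndP, rfl, fun h => hnm (hasMatch_take h)⟩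
      · refine mem_NMS.mpr ⟨hndB, ?_, fun h => hnm (hasMatch_drop h)⟩
        ext a
        rw [List.mem_toFinset, Finset.mem_sdiff, List.mem_toFinset]
        constructor
        · intro ha
          exact ⟨hmemσ a (List.mem_of_mem_drop ha), hdisj a ha⟩
        · rintro ⟨haI, haP⟩
          have haσ : a ∈ σ := by rw [← hfin] at haI; exact List.mem_toFinset.mp haI
          rw [← hsplit] at haσ
          rcases List.mem_append.mp haσ with h | h
          · exact absurd h haP
          · exact h
      · rw [ht]; rfl
    · -- j maps into NMS
      rintro ⟨A, P, B⟩ hp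
      rw [Finset.mem_sigma, Finset.mem_product, Finset.mem_filter] at hp
      dsimp only at hp ⊢
      obtain ⟨hA, hP, hB, hBh⟩ := hp
      rw [Finset.mem_powerset] at hA
      obtain ⟨hndP, hfinP, hnmP⟩ := mem_NMS.mp hP
      obtain ⟨hndB, hfinB, hnmB⟩ := mem_NMS.mp hB
      have hP2 : ∀ x ∈ P, 2 ≤ x := by
        intro x hx
        have : x ∈ A := by rw [← hfinP]; exact List.mem_toFinset.mpr hx
        exact (Finset.mem_Icc.mp (hA this)).1
      obtain ⟨t, rfl⟩ : ∃ t, B = 1 :: t := by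
        cases B with
        | nil => simp at hBh
        | cons b t =>
          simp only [List.head?_cons, Option.some.injEq] at hBh
          exact ⟨t, by rw [hBh]⟩
      have hdisj : P.Disjoint (1 :: t) := by
        intro a haP haB
        have h1 : a ∈ A := by rw [← hfinP]; exact List.mem_toFinset.mpr haP
        have h2 : a ∈ Finset.Icc 1 n \ A := by
          rw [← hfinB]; exact List.mem_toFinset.mpr haB
        exact (Finset.mem_sdiff.mp h2).2 h1
      refine mem_NMS.mpr ⟨List.nodup_append.mpr ⟨hndP, hndB, fun a ha b hb hab => hdisj ha (hab ▸ hb)⟩, ?_, ?_⟩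
      · rw [List.toFinset_append, hfinP, hfinB]
        exact Finset.union_sdiff_of_subset
          (subset_trans hA (Finset.Icc_subset_Icc (by omega) (le_refl n)))
      · exact noMatch_append hΓh hP2 hnmP hnmB
    · -- left inverse
      intro σ hσ
      exact List.take_append_drop _ _
    · -- right inverse
      rintro ⟨A, P, B⟩ hp
      rw [Finset.mem_sigma, Finset.mem_product, Finset.mem_filter] at hp
      dsimp only at hp ⊢
      obtain ⟨hA, hP, hB, hBh⟩ := hp
      rw [Finset.mem_powerset] at hA
      obtain ⟨hndP, hfinP, hnmP⟩ := mem_NMS.mp hP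
      have hP2 : ∀ x ∈ P, 2 ≤ x := by
        intro x hx
        have : x ∈ A := by rw [← hfinP]; exact List.mem_toFinset.mpr hx
        exact (Finset.mem_Icc.mp (hA this)).1
      obtain ⟨t, rfl⟩ : ∃ t, B = 1 :: t := by
        cases B with
        | nil => simp at hBh
        | cons b t =>
          simp only [List.head?_cons, Option.some.injEq] at hBh
          exact ⟨t, by rw [hBh]⟩
      have h1P : (1:ℕ) ∉ P := fun h => by have := hP2 1 h; omega
      have hidx : (P ++ 1 :: t).idxOf 1 = P.length := by
        rw [List.idxOf_append_of_notMem h1P, List.idxOf_cons_self]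
        omega
      simp only [hidx, List.take_left, List.drop_left, hfinP]
    · -- weights
      intro σ hσ
      obtain ⟨t, ht, hP2, ht2⟩ := hfacts σ hσ
      have hsplit : σ.take (σ.idxOf 1) ++ σ.drop (σ.idxOf 1) = σ :=
        List.take_append_drop _ _
      show Wm m σ = _ * (Wm m (σ.take (σ.idxOf 1)) * X ^ (1 + desL (σ.drop (σ.idxOf 1))))
      conv_lhs => rw [← hsplit]
      rw [ht, Wm_split m _ t hP2 ht2]
  have step2 : ∀ A ∈ (Finset.Icc 2 n).powerset,
      ∑ q ∈ (NMS Γ A) ×ˢ ((NMS Γ (Finset.Icc 1 n \ A)).filter (fun l => l.head? = some 1)),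
        (m : Polynomial ℚ) * (Wm m q.1 * X ^ (1 + desL q.2))
      = (m : Polynomial ℚ) * (Gp Γ m A.card * Bp Γ (n - A.card)) := by
    intro A hA
    rw [Finset.mem_powerset] at hA
    have hAsub : A ⊆ Finset.Icc 1 n :=
      subset_trans hA (Finset.Icc_subset_Icc (by omega) (le_refl n))
    have hcard : (Finset.Icc 1 n \ A).card = n - A.card := by
      rw [Finset.card_sdiff, Finset.inter_eq_left.mpr hAsub, Nat.card_Icc]
      omega
    have hsum1 : ∑ P ∈ NMS Γ A, Wm m P = Gp Γ m A.card := by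
      rw [Gp]
      exact sum_NMS_transfer A (Wm m) (Wm_map m)
    have hsum2 : ∑ B ∈ (NMS Γ (Finset.Icc 1 n \ A)).filter (fun l => l.head? = some 1),
        (X : Polynomial ℚ) ^ (1 + desL B) = Bp Γ (n - A.card) := by
      have h1mem : (1:ℕ) ∈ Finset.Icc 1 n \ A := by
        rw [Finset.mem_sdiff]
        refine ⟨Finset.mem_Icc.mpr ⟨le_refl 1, hn⟩, fun h => ?_⟩
        have := Finset.mem_Icc.mp (hA h)
        omega
      have hcard1 : 1 ≤ n - A.card := by
        have := Finset.card_le_card hA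
        rw [Nat.card_Icc] at this
        omega
      have hFinv : ∀ (l : List ℕ) (f : ℕ → ℕ), OrdIsoOn f l →
          (if (∀ y ∈ l.map f, (l.map f).getD 0 0 ≤ y) then (X : Polynomial ℚ) ^ (1 + desL (l.map f)) else 0)
          = (if (∀ y ∈ l, l.getD 0 0 ≤ y) then (X : Polynomial ℚ) ^ (1 + desL l) else 0) := by
        intro l f hf
        by_cases hc : ∀ y ∈ l, l.getD 0 0 ≤ y
        · rw [if_pos ((headMin_map hf).mpr hc), if_pos hc, desL_map hf]
        · rw [if_neg ((headMin_map hf).not.mpr hc), if_neg hc]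
      calc ∑ B ∈ (NMS Γ (Finset.Icc 1 n \ A)).filter (fun l => l.head? = some 1),
            (X : Polynomial ℚ) ^ (1 + desL B)
          = ∑ B ∈ NMS Γ (Finset.Icc 1 n \ A),
              (if (∀ y ∈ B, B.getD 0 0 ≤ y) then (X : Polynomial ℚ) ^ (1 + desL B) else 0) := by
            rw [Finset.sum_filter]
            refine Finset.sum_congr rfl (fun B hB => ?_)
            obtain ⟨hnd, hfin, -⟩ := mem_NMS.mp hB
            exact (if_congr (headMin_iff_head1 hnd hfin h1mem
              (fun x hx => (Finset.mem_Icc.mp (Finset.mem_sdiff.mp hx).1).1)) rfl rfl).symm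
        _ = ∑ B ∈ NMS Γ (Finset.Icc 1 (n - A.card)),
              (if (∀ y ∈ B, B.getD 0 0 ≤ y) then (X : Polynomial ℚ) ^ (1 + desL B) else 0) := by
            have := sum_NMS_transfer (Γ := Γ) (Finset.Icc 1 n \ A)
              (fun l => if (∀ y ∈ l, l.getD 0 0 ≤ y) then (X : Polynomial ℚ) ^ (1 + desL l) else 0)
              hFinv
            rwa [hcard] at this
        _ = ∑ B ∈ NMS Γ (Finset.Icc 1 (n - A.card)),
              (if B.head? = some 1 then (X : Polynomial ℚ) ^ (1 + desL B) else 0) := by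
            refine Finset.sum_congr rfl (fun B hB => ?_)
            obtain ⟨hnd, hfin, -⟩ := mem_NMS.mp hB
            exact if_congr (headMin_iff_head1 hnd hfin
              (Finset.mem_Icc.mpr ⟨le_refl 1, hcard1⟩)
              (fun x hx => (Finset.mem_Icc.mp hx).1)) rfl rfl
        _ = Bp Γ (n - A.card) := by
            rw [Bp, Finset.sum_filter]
    rw [Finset.sum_product]
    calc ∑ P ∈ NMS Γ A, ∑ B ∈ (NMS Γ (Finset.Icc 1 n \ A)).filter (fun l => l.head? = some 1),
          (m : Polynomial ℚ) * (Wm m P * X ^ (1 + desL B))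
        = (m : Polynomial ℚ) * ((∑ P ∈ NMS Γ A, Wm m P) *
            (∑ B ∈ (NMS Γ (Finset.Icc 1 n \ A)).filter (fun l => l.head? = some 1),
              (X : Polynomial ℚ) ^ (1 + desL B))) := by
          rw [Finset.sum_mul_sum, Finset.mul_sum]
          refine Finset.sum_congr rfl (fun P _ => ?_)
          rw [Finset.mul_sum]
      _ = (m : Polynomial ℚ) * (Gp Γ m A.card * Bp Γ (n - A.card)) := by
          rw [hsum1, hsum2]
  rw [step1, Finset.sum_sigma, Finset.sum_congr rfl step2]
  have hc2n : (Finset.Icc 2 n).card = n - 1 := by rw [Nat.card_Icc]; omega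
  rw [Finset.sum_powerset]
  have step3 : ∀ j ∈ Finset.range ((Finset.Icc 2 n).card + 1),
      ∑ A ∈ Finset.powersetCard j (Finset.Icc 2 n),
        (m : Polynomial ℚ) * (Gp Γ m A.card * Bp Γ (n - A.card))
      = ((n-1).choose j : Polynomial ℚ) * ((m : Polynomial ℚ) * (Gp Γ m j * Bp Γ (n - j))) := by
    intro j hj
    rw [Finset.sum_congr rfl (fun A hA => by
      rw [(Finset.mem_powersetCard.mp hA).2]), Finset.sum_const, Finset.card_powersetCard,
      hc2n, nsmul_eq_mul]
  rw [Finset.sum_congr rfl step3, hc2n, Finset.mul_sum]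
  apply Finset.sum_nbij' (i := fun j => n - j) (j := fun k => n - k)
  · intro j hj
    rw [Finset.mem_range] at hj
    rw [Finset.mem_Icc]
    omega
  · intro k hk
    rw [Finset.mem_Icc] at hk
    rw [Finset.mem_range]
    omega
  · intro j hj
    rw [Finset.mem_range] at hj
    omega
  · intro k hk
    rw [Finset.mem_Icc] at hk
    omega
  · intro j hj
    rw [Finset.mem_range] at hj
    have hch : (n-1).choose (n - j - 1) = (n-1).choose j := by
      have h2 : n - j - 1 = (n - 1) - j := by omega
      rw [h2]
      exact Nat.choose_symm (by omega)
    have hj2 : n - (n - j) = j := by omega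
    rw [hj2, hch]
    ring

end Part8

section Part9
variable {Γ : Set (List ℕ)}

noncomputable def gSer (Γ : Set (List ℕ)) (m : ℕ) : PowerSeries (Polynomial ℚ) :=
  PowerSeries.mk fun n => (1 / (n.factorial : ℚ)) • Gp Γ m n

noncomputable def bSer (Γ : Set (List ℕ)) : PowerSeries (Polynomial ℚ) :=
  PowerSeries.mk fun n => if n = 0 then 0 else (1 / (n.factorial : ℚ)) • Bp Γ n

lemma natCast_mul_eq_smul (c : ℕ) (p : Polynomial ℚ) : (c : Polynomial ℚ) * p = (c : ℚ) • p := by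
  rw [Polynomial.smul_eq_C_mul]
  norm_cast

lemma mul_natCast_eq_smul (c : ℕ) (p : Polynomial ℚ) : p * (c : Polynomial ℚ) = (c : ℚ) • p := by
  rw [mul_comm, natCast_mul_eq_smul]

lemma smul_mul_smul_poly (a b : ℚ) (x y : Polynomial ℚ) :
    (a • x) * (b • y) = (a * b) • (x * y) := by
  rw [smul_mul_assoc, mul_smul_comm, smul_smul]

lemma coeff_derivativeFun' (f : PowerSeries (Polynomial ℚ)) (n : ℕ) :
    PowerSeries.coeff n (PowerSeries.derivativeFun f) = PowerSeries.coeff (n + 1) f * (n + 1) :=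
  PowerSeries.coeff_derivative f n

/-- Uniqueness for the linear ODE `f' = u f` in formal power series. -/
lemma ode_unique (u f g : PowerSeries (Polynomial ℚ))
    (hf : PowerSeries.derivativeFun f = u * f) (hg : PowerSeries.derivativeFun g = u * g)
    (h0 : PowerSeries.coeff 0 f = PowerSeries.coeff 0 g) : f = g := by
  refine PowerSeries.ext fun n => ?_
  induction n using Nat.strong_induction_on with
  | _ n ih =>
    match n with
    | 0 => exact h0
    | (n+1) =>
      have h1 : PowerSeries.coeff n (PowerSeries.derivativeFun f) =
          PowerSeries.coeff n (PowerSeries.derivativeFun g) := by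
        rw [hf, hg, PowerSeries.coeff_mul, PowerSeries.coeff_mul]
        refine Finset.sum_congr rfl (fun p hp => ?_)
        rw [Finset.HasAntidiagonal.mem_antidiagonal] at hp
        rw [ih p.2 (by omega)]
      rw [coeff_derivativeFun', coeff_derivativeFun'] at h1
      have h2 : (n + 1) • (PowerSeries.coeff (n+1) f) =
          (n + 1) • (PowerSeries.coeff (n+1) g) := by
        rw [nsmul_eq_mul, nsmul_eq_mul]
        push_cast
        rw [mul_comm, mul_comm ((n : Polynomial ℚ) + 1)]
        exact h1
      exact (smul_right_inj (Nat.succ_ne_zero n)).mp h2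

lemma inv_fact_succ_mul (j : ℕ) :
    (1 / ((j+1).factorial : ℚ)) * ((j+1 : ℕ) : ℚ) = 1 / (j.factorial : ℚ) := by
  rw [Nat.factorial_succ]
  have h1 : ((j.factorial : ℚ)) ≠ 0 := Nat.cast_ne_zero.mpr (Nat.factorial_ne_zero j)
  have h2 : ((j : ℚ) + 1) ≠ 0 := by positivity
  push_cast
  field_simp

lemma gSer_ode (hΓh : ∀ τ ∈ Γ, τ.head? = some 1) (m : ℕ) :
    PowerSeries.derivativeFun (gSer Γ m) =
      (PowerSeries.C ((m : Polynomial ℚ))) *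
        (PowerSeries.derivativeFun (bSer Γ) * gSer Γ m) := by
  refine PowerSeries.ext fun n => ?_
  rw [coeff_derivativeFun', PowerSeries.coeff_C_mul, PowerSeries.coeff_mul,
    Finset.mul_sum, Finset.Nat.sum_antidiagonal_eq_sum_range_succ_mk]
  have canonical : ∀ j ∈ Finset.range (n+1),
      (m : Polynomial ℚ) * (PowerSeries.coeff (j, n-j).1 (PowerSeries.derivativeFun (bSer Γ)) *
        PowerSeries.coeff (j, n-j).2 (gSer Γ m)) =
      ((1:ℚ) / (j.factorial * (n-j).factorial)) •
        ((m : Polynomial ℚ) * (Bp Γ (j+1) * Gp Γ m (n-j))) := by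
    intro j hj
    have hb : PowerSeries.coeff (j+1) (bSer Γ) = (1 / ((j+1).factorial : ℚ)) • Bp Γ (j+1) := by
      rw [bSer, PowerSeries.coeff_mk, if_neg (Nat.succ_ne_zero j)]
    show (m : Polynomial ℚ) * (PowerSeries.coeff j (PowerSeries.derivativeFun (bSer Γ)) *
        PowerSeries.coeff (n-j) (gSer Γ m)) = _
    have hcast : ((j : Polynomial ℚ) + 1) = (((j+1 : ℕ)) : Polynomial ℚ) := by push_cast; ring
    have hdb : PowerSeries.coeff j (PowerSeries.derivativeFun (bSer Γ)) =
        (1 / (j.factorial : ℚ)) • Bp Γ (j+1) := by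
      rw [coeff_derivativeFun', hb, hcast, smul_mul_assoc, mul_natCast_eq_smul,
        smul_smul, inv_fact_succ_mul j]
    rw [hdb, gSer, PowerSeries.coeff_mk, smul_mul_smul_poly, mul_smul_comm]
    congr 1
    rw [div_mul_div_comm, one_mul]
  rw [Finset.sum_congr rfl canonical, gSer, PowerSeries.coeff_mk]
  have hcast : ((n : Polynomial ℚ) + 1) = (((n+1 : ℕ)) : Polynomial ℚ) := by push_cast; ring
  rw [hcast, smul_mul_assoc, mul_natCast_eq_smul, smul_smul, inv_fact_succ_mul n,
    Gp_rec hΓh m (n+1) (by omega)]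
  have hn1 : n + 1 - 1 = n := rfl
  rw [hn1, Finset.mul_sum, Finset.smul_sum]
  apply Finset.sum_nbij' (i := fun k => k - 1) (j := fun j => j + 1)
  · intro k hk
    rw [Finset.mem_Icc] at hk
    rw [Finset.mem_range]
    omega
  · intro j hj
    rw [Finset.mem_range] at hj
    rw [Finset.mem_Icc]
    omega
  · intro k hk
    rw [Finset.mem_Icc] at hk
    omega
  · intro j hj
    omega
  · intro k hk
    rw [Finset.mem_Icc] at hk
    have h1 : k - 1 + 1 = k := by omega
    have h2 : n - (k - 1) = n + 1 - k := by omega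
    rw [h1, h2, mul_comm ((n.choose (k-1) : Polynomial ℚ)) (Bp Γ k * Gp Γ m (n+1-k)),
      mul_natCast_eq_smul, mul_smul_comm, smul_smul]
    congr 1
    rw [Nat.cast_choose ℚ (show k - 1 ≤ n by omega)]
    have hne1 : ((k-1).factorial : ℚ) ≠ 0 := Nat.cast_ne_zero.mpr (Nat.factorial_ne_zero _)
    have hne2 : ((n-(k-1)).factorial : ℚ) ≠ 0 := Nat.cast_ne_zero.mpr (Nat.factorial_ne_zero _)
    have hne3 : ((n.factorial : ℚ)) ≠ 0 := Nat.cast_ne_zero.mpr (Nat.factorial_ne_zero _)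
    rw [show n + 1 - k = n - (k-1) from by omega]
    field_simp

end Part9

section Part10
variable {Γ : Set (List ℕ)}

lemma Gp_eq_sum (m n : ℕ) (hn : n ≠ 0) :
    Gp Γ m n = ∑ σ ∈ NMfinset Γ n, (m : Polynomial ℚ) ^ LRminL σ * X ^ (1 + desL σ) := by
  rw [Gp, ← NMfinset_eq_NMS]
  refine Finset.sum_congr rfl (fun σ hσ => ?_)
  have hlen : σ.length = n := by
    have := length_of_mem_NMS (NMfinset_eq_NMS n ▸ hσ)
    rwa [Nat.card_Icc, Nat.add_sub_cancel] at this
  have hne : σ ≠ [] := by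
    intro h
    rw [h] at hlen
    simp at hlen
    omega
  rw [Wm, if_neg hne]

lemma NMpoly_eq_Gp_one (n : ℕ) : NMpoly Γ n = Gp Γ 1 n := by
  rcases eq_or_ne n 0 with rfl | hn
  · rw [NMpoly, if_pos rfl, Gp_zero]
  · rw [NMpoly, if_neg hn, Gp_eq_sum 1 n hn]
    refine Finset.sum_congr rfl (fun σ _ => ?_)
    rw [Nat.cast_one, one_pow, one_mul]

lemma derivativeFun_pow (f : PowerSeries (Polynomial ℚ)) (k : ℕ) :
    PowerSeries.derivativeFun (f ^ (k+1)) =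
      ((k+1 : ℕ) : PowerSeries (Polynomial ℚ)) * (f ^ k * PowerSeries.derivativeFun f) := by
  induction k with
  | zero => simp
  | succ k ih =>
    rw [pow_succ, PowerSeries.derivativeFun_mul, smul_eq_mul, smul_eq_mul, ih]
    push_cast
    ring

theorem stmt16' (Γ : Set (List ℕ)) (hfin : Γ.Finite)
    (hΓ : ∀ τ ∈ Γ, τ.Perm (List.range' 1 τ.length) ∧ τ.head? = some 1)
    (m : ℕ) (hm : 1 ≤ m) :
    PowerSeries.mk (fun n => if n = 0 then (1 : Polynomial ℚ) else
        (1 / (n.factorial : ℚ)) •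
          ∑ σ ∈ NMfinset Γ n, (m : Polynomial ℚ) ^ LRminL σ * X ^ (1 + desL σ)) =
      (PowerSeries.mk fun n => (1 / (n.factorial : ℚ)) • NMpoly Γ n) ^ m := by
  classical
  have hΓh : ∀ τ ∈ Γ, τ.head? = some 1 := fun τ hτ => (hΓ τ hτ).2
  have hL : PowerSeries.mk (fun n => if n = 0 then (1 : Polynomial ℚ) else
      (1 / (n.factorial : ℚ)) •
        ∑ σ ∈ NMfinset Γ n, (m : Polynomial ℚ) ^ LRminL σ * X ^ (1 + desL σ)) = gSer Γ m := by
    refine PowerSeries.ext fun n => ?_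
    rw [PowerSeries.coeff_mk, gSer, PowerSeries.coeff_mk]
    rcases eq_or_ne n 0 with rfl | hn
    · rw [if_pos rfl, Gp_zero]
      norm_num
    · rw [if_neg hn, Gp_eq_sum m n hn]
  have hR : (PowerSeries.mk fun n => (1 / (n.factorial : ℚ)) • NMpoly Γ n) = gSer Γ 1 := by
    refine PowerSeries.ext fun n => ?_
    rw [PowerSeries.coeff_mk, gSer, PowerSeries.coeff_mk, NMpoly_eq_Gp_one]
  rw [hL, hR]
  have hd1 : PowerSeries.derivativeFun (gSer Γ 1) =
      PowerSeries.derivativeFun (bSer Γ) * gSer Γ 1 := by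
    have h := gSer_ode hΓh 1
    rw [Nat.cast_one, map_one, one_mul] at h
    exact h
  apply ode_unique (u := PowerSeries.C ((m : Polynomial ℚ)) *
    PowerSeries.derivativeFun (bSer Γ))
  · rw [gSer_ode hΓh m, mul_assoc]
  · have hpow : PowerSeries.derivativeFun ((gSer Γ 1) ^ m) =
        ((m : ℕ) : PowerSeries (Polynomial ℚ)) *
          ((gSer Γ 1) ^ (m-1) * PowerSeries.derivativeFun (gSer Γ 1)) := by
      have h := derivativeFun_pow (gSer Γ 1) (m-1)
      rw [Nat.sub_add_cancel hm] at h
      exact h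
    rw [hpow, hd1]
    have hcomb : (gSer Γ 1) ^ (m-1) * (PowerSeries.derivativeFun (bSer Γ) * gSer Γ 1) =
        PowerSeries.derivativeFun (bSer Γ) * (gSer Γ 1) ^ m := by
      calc (gSer Γ 1) ^ (m-1) * (PowerSeries.derivativeFun (bSer Γ) * gSer Γ 1)
          = PowerSeries.derivativeFun (bSer Γ) * ((gSer Γ 1) ^ (m-1) * gSer Γ 1) := by ring
        _ = PowerSeries.derivativeFun (bSer Γ) * (gSer Γ 1) ^ m := by
            rw [← pow_succ, Nat.sub_add_cancel hm]
    rw [hcomb, ← map_natCast (PowerSeries.C) m, mul_assoc]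
  · have hc : PowerSeries.constantCoeff (gSer Γ 1) = 1 := by
      rw [gSer, ← PowerSeries.coeff_zero_eq_constantCoeff, PowerSeries.coeff_mk, Gp_zero]
      norm_num
    have hcm : PowerSeries.constantCoeff (gSer Γ m) = 1 := by
      rw [gSer, ← PowerSeries.coeff_zero_eq_constantCoeff, PowerSeries.coeff_mk, Gp_zero]
      norm_num
    rw [PowerSeries.coeff_zero_eq_constantCoeff, map_pow, hcm, hc, one_pow]

end Part10

theorem stmt16 (Γ : Set (List ℕ)) (hfin : Γ.Finite)
    (hΓ : ∀ τ ∈ Γ, τ.Perm (List.range' 1 τ.length) ∧ τ.head? = some 1)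
    (m : ℕ) (hm : 1 ≤ m) :
    PowerSeries.mk (fun n => if n = 0 then (1 : Polynomial ℚ) else
        (1 / (n.factorial : ℚ)) •
          ∑ σ ∈ NMfinset Γ n, (m : Polynomial ℚ) ^ LRminL σ * X ^ (1 + desL σ)) =
      (PowerSeries.mk fun n => (1 / (n.factorial : ℚ)) • NMpoly Γ n) ^ m :=
  stmt16' Γ hfin hΓ m hm
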